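/- Let K be a complex Hilbert space, A_1, …, A_n positive invertible bounded self-adjoint operators on K, μ_1, …, μ_n > 0, and y ∈ K. If u_1, …, u_n ∈ K satisfy Σ_k μ_k u_k = y and Σ_k ⟨A_k u_k, u_k⟩ = ⟨(Σ_j μ_j² A_j^{-1})^{-1} y, y⟩, then u_k = μ_k A_k^{-1} (Σ_j μ_j² A_j^{-1})^{-1} y for every k. -/

import Mathlib

/-- Uniqueness of the minimizer in the minimization lemma. -/
theorem stmt3 {K : Type*} [NormedAddCommGroup K] [InnerProductSpace ℂ K] [CompleteSpace K]
    (n : ℕ) (A Ainv : Fin n → K →L[ℂ] K) (μ : Fin n → ℝ) (y : K)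
    (hA : ∀ k, (A k).IsPositive)
    (hAinv : ∀ k, (A k) ∘L (Ainv k) = 1 ∧ (Ainv k) ∘L (A k) = 1)
    (hAc : ∀ k, ∃ c : ℝ, 0 < c ∧ ∀ x : K, c * ‖x‖ ^ 2 ≤ ((inner ℂ ((A k) x) x : ℂ)).re)
    (hμ : ∀ k, 0 < μ k)
    (Tinv : K →L[ℂ] K)
    (hTinv : (∑ j, ((μ j : ℂ) ^ 2) • Ainv j) ∘L Tinv = 1 ∧
             Tinv ∘L (∑ j, ((μ j : ℂ) ^ 2) • Ainv j) = 1)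
    (u : Fin n → K) (hu : ∑ k, (μ k : ℂ) • u k = y)
    (hmin : ∑ k, ((inner ℂ ((A k) (u k)) (u k) : ℂ)).re = ((inner ℂ (Tinv y) y : ℂ)).re) :
    ∀ k, u k = (μ k : ℂ) • (Ainv k) (Tinv y) := by
  have hAinv_apply : ∀ k x, A k (Ainv k x) = x := fun k x =>
    congrArg (fun f => f x) (hAinv k).1
  set v : Fin n → K := fun k => (μ k : ℂ) • Ainv k (Tinv y) with hv
  have hAv : ∀ k, A k (v k) = (μ k : ℂ) • Tinv y := by
    intro k; simp [hv, map_smul, hAinv_apply]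
  have hsumv : ∑ k, (μ k : ℂ) • v k = y := by
    have h1 : ∑ k, (μ k : ℂ) • v k = (∑ j, ((μ j : ℂ) ^ 2) • Ainv j) (Tinv y) := by
      simp [hv, ContinuousLinearMap.sum_apply, ContinuousLinearMap.smul_apply,
        smul_smul, sq]
      exact Finset.sum_congr rfl fun x _ => by norm_cast
    rw [h1, ← ContinuousLinearMap.comp_apply, hTinv.1, ContinuousLinearMap.one_apply]
  set w : Fin n → K := fun k => u k - v k with hw
  have hsumw : ∑ k, (μ k : ℂ) • w k = 0 := by
    simp only [hw, smul_sub, Finset.sum_sub_distrib, hu, hsumv, sub_self]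
  -- key sum identity: for any family z
  have hsum_inner : ∀ z : Fin n → K,
      ∑ k, (inner ℂ (A k (v k)) (z k) : ℂ) = (inner ℂ (Tinv y) (∑ k, (μ k : ℂ) • z k) : ℂ) := by
    intro z
    rw [inner_sum]
    refine Finset.sum_congr rfl fun k _ => ?_
    rw [hAv, inner_smul_left, inner_smul_right, Complex.conj_ofReal]
  have hsym : ∀ k (x z : K), (inner ℂ (A k x) z : ℂ) = inner ℂ x (A k z) := fun k =>
    (hA k).1
  -- expansion
  have hexp : ∀ k, (inner ℂ (A k (u k)) (u k) : ℂ)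
      = inner ℂ (A k (v k)) (v k) + inner ℂ (A k (v k)) (w k)
        + inner ℂ (A k (w k)) (v k) + inner ℂ (A k (w k)) (w k) := by
    intro k
    have huk : u k = v k + w k := by simp [hw]
    rw [huk, map_add, inner_add_left, inner_add_right, inner_add_right]
    ring
  have hFv : ∑ k, (inner ℂ (A k (v k)) (v k) : ℂ) = inner ℂ (Tinv y) y := by
    rw [hsum_inner v, hsumv]
  have hcross1 : ∑ k, (inner ℂ (A k (v k)) (w k) : ℂ) = 0 := by
    rw [hsum_inner w, hsumw, inner_zero_right]
  have hcross2 : ∑ k, (inner ℂ (A k (w k)) (v k) : ℂ) = 0 := by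
    have : ∀ k, (inner ℂ (A k (w k)) (v k) : ℂ)
        = (starRingEnd ℂ) (inner ℂ (A k (v k)) (w k)) := by
      intro k; rw [hsym k, ← inner_conj_symm]
    simp only [this, ← map_sum, hcross1, map_zero]
  have hS : ∑ k, ((inner ℂ (A k (w k)) (w k) : ℂ)).re = 0 := by
    have hsum : ∑ k, (inner ℂ (A k (u k)) (u k) : ℂ)
        = inner ℂ (Tinv y) y + ∑ k, (inner ℂ (A k (w k)) (w k) : ℂ) := by
      calc ∑ k, (inner ℂ (A k (u k)) (u k) : ℂ)
          = ∑ k, ((inner ℂ (A k (v k)) (v k) : ℂ) + inner ℂ (A k (v k)) (w k)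
              + inner ℂ (A k (w k)) (v k) + inner ℂ (A k (w k)) (w k)) :=
            Finset.sum_congr rfl fun k _ => hexp k
        _ = _ := by
            simp only [Finset.sum_add_distrib, hFv, hcross1, hcross2, add_zero]
    have := congrArg Complex.re hsum
    simp only [Complex.add_re, Complex.re_sum] at this
    rw [hmin] at this
    linarith
  have hnonneg : ∀ k ∈ Finset.univ, 0 ≤ ((inner ℂ (A k (w k)) (w k) : ℂ)).re := by
    intro k _
    obtain ⟨c, hc, hcle⟩ := hAc k
    have := hcle (w k)
    nlinarith [sq_nonneg ‖w k‖]
  have hzero := (Finset.sum_eq_zero_iff_of_nonneg hnonneg).mp hS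
  intro k
  obtain ⟨c, hc, hcle⟩ := hAc k
  have h1 : c * ‖w k‖ ^ 2 ≤ 0 := by
    rw [← hzero k (Finset.mem_univ k)]; exact hcle (w k)
  have hx : ‖w k‖ ^ 2 = 0 := le_antisymm (by nlinarith [sq_nonneg ‖w k‖]) (sq_nonneg _)
  have h2 : ‖w k‖ = 0 := (pow_eq_zero_iff two_ne_zero).mp hx
  have h3 : w k = 0 := norm_eq_zero.mp h2
  have : u k - v k = 0 := h3
  have := sub_eq_zero.mp this
  simpa [hv] using this
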